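/- Let A be a ring, f ∈ A, and M an A-module whose f^∞-torsion is bounded by N (i.e. the set of elements killed by some power of f equals the set killed by f^N). Then the classical f-adic completion of M also has f^∞-torsion bounded by N. -/

import Mathlib

open Pointwise

/-- If an `A`-module `M` has `f^∞`-torsion bounded by `N` (every element killed by some power
of `f` is killed by `f^N`), then its classical `f`-adic completion also has `f^∞`-torsion
bounded by `N`. -/
theorem stmt0 (A : Type*) [CommRing A] (f : A)
    (M : Type*) [AddCommGroup M] [Module A M] (N : ℕ)
    (h : ∀ x : M, (∃ n : ℕ, f ^ n • x = 0) → f ^ N • x = 0) :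
    ∀ y : AdicCompletion (Ideal.span {f}) M,
      (∃ n : ℕ, f ^ n • y = 0) → f ^ N • y = 0 := by
  intro y ⟨n, hn⟩
  have hpow : ∀ j : ℕ, ((Ideal.span {f} : Ideal A) ^ j • ⊤ : Submodule A M)
      = f ^ j • (⊤ : Submodule A M) := by
    intro j
    rw [Ideal.span_singleton_pow, Submodule.ideal_span_singleton_smul]
  ext k
  rw [AdicCompletion.val_smul, AdicCompletion.val_zero, Pi.smul_apply, Pi.zero_apply]
  obtain ⟨m, hm⟩ := Submodule.Quotient.mk_surjective _ (y.val (k + n))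
  have h1 : f ^ n • m ∈ ((Ideal.span {f} : Ideal A) ^ (k + n) • ⊤ : Submodule A M) := by
    rw [← Submodule.Quotient.mk_eq_zero, Submodule.Quotient.mk_smul, hm]
    have := congrArg (fun z => AdicCompletion.eval (Ideal.span {f}) M (k + n) z) hn
    simpa [AdicCompletion.val_smul] using this
  rw [hpow] at h1
  obtain ⟨m', -, hm'⟩ := Set.mem_smul_set.mp h1
  have h2 : f ^ n • (m - f ^ k • m') = 0 := by
    have e : f ^ n • (f ^ k • m') = f ^ (k + n) • m' := by
      rw [smul_smul, ← pow_add, add_comm n k]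
    rw [smul_sub, e, ← hm', sub_self]
  have h3 := h _ ⟨n, h2⟩
  have h4 : f ^ N • m ∈ ((Ideal.span {f} : Ideal A) ^ k • ⊤ : Submodule A M) := by
    rw [smul_sub, sub_eq_zero] at h3
    rw [h3, hpow, smul_comm]
    exact Submodule.smul_mem_pointwise_smul _ _ _ Submodule.mem_top
  have h5 : y.val k = AdicCompletion.transitionMap (Ideal.span {f}) M (Nat.le_add_right k n)
      (y.val (k + n)) :=
    (AdicCompletion.transitionMap_comp_eval_apply _ M _ y).symm
  rw [h5, ← hm, ← map_smul, ← Submodule.Quotient.mk_smul]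
  change Submodule.Quotient.mk (f ^ N • m) = (0 : M ⧸ ((Ideal.span {f} : Ideal A) ^ k • ⊤ : Submodule A M))
  rw [Submodule.Quotient.mk_eq_zero]
  exact h4
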